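/- The polynomial q(x) = 8x⁴ + 14x³ − 11x² − 11x − 2 is irreducible over ℚ, and for any root β of q in ℂ, the quartic number field ℚ(β) is a Galois extension of ℚ whose Galois group is cyclic of order 4; i.e. ℚ(β) is a cyclic quartic number field. -/

import Mathlib

open Polynomial
open scoped IntermediateField

/-! ### Auxiliary lemmas for irreducibility of quartics over a field -/

lemma monic_quad_eq' {F : Type*} [Field F] {p : F[X]} (hm : p.Monic) (h2 : p.natDegree = 2) :
    p = X ^ 2 + C (p.coeff 1) * X + C (p.coeff 0) := by
  ext n
  have hlead := hm.coeff_natDegree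
  rw [h2] at hlead
  rcases n with _ | _ | _ | n
  · simp [coeff_C]
  · simp [coeff_C]
  · simpa [coeff_C, coeff_X] using hlead
  · have : p.natDegree < n + 3 := by omega
    simp [coeff_eq_zero_of_natDegree_lt this, coeff_C, coeff_X_pow, coeff_X]

lemma monic_lin_eq' {F : Type*} [Field F] {p : F[X]} (hm : p.Monic) (h1 : p.natDegree = 1) :
    p = X + C (p.coeff 0) := by
  ext n
  have hlead := hm.coeff_natDegree
  rw [h1] at hlead
  rcases n with _ | _ | n
  · simp [coeff_C]
  · simpa [coeff_C, coeff_X] using hlead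
  · have : p.natDegree < n + 2 := by omega
    simp [coeff_eq_zero_of_natDegree_lt this, coeff_C, coeff_X]

lemma irred4' {F : Type*} [Field F] {m : F[X]} (hm : m.Monic) (hdeg : m.natDegree = 4)
    (hroot : ∀ x : F, m.eval x ≠ 0)
    (hquad : ∀ a b c d : F, m ≠ (X ^ 2 + C a * X + C b) * (X ^ 2 + C c * X + C d)) :
    Irreducible m := by
  rw [hm.irreducible_iff_natDegree']
  constructor
  · rintro rfl; simp at hdeg
  · rintro f g hf hg hfg hgdeg
    rw [Finset.mem_Ioc, hdeg] at hgdeg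
    have hsum : f.natDegree + g.natDegree = 4 := by
      rw [← hf.natDegree_mul hg, hfg, hdeg]
    have hg1 : 0 < g.natDegree := hgdeg.1
    have hg2 : g.natDegree ≤ 2 := hgdeg.2
    interval_cases hgd : g.natDegree
    · have hge := monic_lin_eq' hg hgd
      apply hroot (-(g.coeff 0))
      rw [← hfg, eval_mul, hge]
      simp
    · have hfd : f.natDegree = 2 := by omega
      exact hquad (f.coeff 1) (f.coeff 0) (g.coeff 1) (g.coeff 0)
        (by rw [← monic_quad_eq' hf hfd, ← monic_quad_eq' hg hgd, hfg])

/-! ### The quartic `X⁴ + 7X³ - 22X² - 88X - 64` is irreducible mod 3 -/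

noncomputable def m3' : (ZMod 3)[X] := X ^ 4 + C 1 * X ^ 3 - C 1 * X ^ 2 - C 1 * X - C 1

lemma m3'_monic : m3'.Monic := by unfold m3'; monicity!

lemma m3'_natDegree : m3'.natDegree = 4 := by unfold m3'; compute_degree!

lemma m3'_no_root : ∀ x : ZMod 3, m3'.eval x ≠ 0 := by
  intro x
  simp only [m3', eval_add, eval_sub, eval_mul, eval_pow, eval_X, eval_C]
  revert x; decide

lemma m3'_no_quad : ∀ a b c d : ZMod 3,
    m3' ≠ (X ^ 2 + C a * X + C b) * (X ^ 2 + C c * X + C d) := by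
  intro a b c d h
  have hexp : (X ^ 2 + C a * X + C b) * (X ^ 2 + C c * X + C d) =
      X ^ 4 + C (a + c) * X ^ 3 + C (b + d + a * c) * X ^ 2 + C (a * d + b * c) * X
        + C (b * d) := by
    simp only [C_add, C_mul]; ring
  rw [hexp, m3'] at h
  have h0 := congrArg (fun p => coeff p 0) h
  have h1 := congrArg (fun p => coeff p 1) h
  have h2 := congrArg (fun p => coeff p 2) h
  have h3 := congrArg (fun p => coeff p 3) h
  simp only [coeff_add, coeff_sub, coeff_C_mul, coeff_X_pow, coeff_C, coeff_X,
    coeff_one] at h0 h1 h2 h3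
  norm_num at h0 h1 h2 h3
  clear h hexp
  revert h0 h1 h2 h3
  revert a b c d; decide

lemma m3'_irred : Irreducible m3' := irred4' m3'_monic m3'_natDegree m3'_no_root m3'_no_quad

/-! ### Lifting irreducibility to `ℤ` and `ℚ` -/

noncomputable def rZ' : ℤ[X] := X ^ 4 + 7 * X ^ 3 - 22 * X ^ 2 - 88 * X - 64

lemma rZ'_monic : rZ'.Monic := by unfold rZ'; monicity!

lemma rZ'_map3 : rZ'.map (Int.castRingHom (ZMod 3)) = m3' := by
  unfold rZ' m3'
  simp only [Polynomial.map_add, Polynomial.map_sub, Polynomial.map_mul, Polynomial.map_pow,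
    Polynomial.map_ofNat, map_X]
  rw [show ((7 : (ZMod 3)[X])) = C 7 from (map_ofNat C 7).symm,
    show ((22 : (ZMod 3)[X])) = C 22 from (map_ofNat C 22).symm,
    show ((88 : (ZMod 3)[X])) = C 88 from (map_ofNat C 88).symm,
    show ((64 : (ZMod 3)[X])) = C 64 from (map_ofNat C 64).symm,
    show ((7 : ZMod 3)) = 1 from by decide,
    show ((22 : ZMod 3)) = 1 from by decide,
    show ((88 : ZMod 3)) = 1 from by decide,
    show ((64 : ZMod 3)) = 1 from by decide]

lemma rZ'_irred : Irreducible rZ' :=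
  rZ'_monic.irreducible_of_irreducible_map (Int.castRingHom (ZMod 3)) rZ'
    (rZ'_map3 ▸ m3'_irred)

noncomputable def rQ' : ℚ[X] := rZ'.map (Int.castRingHom ℚ)

lemma rQ'_eq : rQ' = X ^ 4 + 7 * X ^ 3 - 22 * X ^ 2 - 88 * X - 64 := by
  unfold rQ' rZ'
  simp only [Polynomial.map_add, Polynomial.map_sub, Polynomial.map_mul, Polynomial.map_pow,
    Polynomial.map_ofNat, map_X]

lemma rQ'_irred : Irreducible rQ' :=
  (Polynomial.IsPrimitive.Int.irreducible_iff_irreducible_map_cast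
    rZ'_monic.isPrimitive).mp rZ'_irred

noncomputable instance inv4Q : Invertible (4 : ℚ) := invertibleOfNonzero (by norm_num)

lemma q_irred (q : ℚ[X]) (hq : q = 8 * X ^ 4 + 14 * X ^ 3 - 11 * X ^ 2 - 11 * X - 2) :
    Irreducible q := by
  have himg : Irreducible ((algEquivCMulXAddC (4 : ℚ) 0) rQ') :=
    (MulEquiv.irreducible_iff (algEquivCMulXAddC (4 : ℚ) 0)).mpr rQ'_irred
  have hkey : q * C 32 = (algEquivCMulXAddC (4 : ℚ) 0) rQ' := by
    rw [hq, rQ'_eq]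
    simp only [algEquivCMulXAddC_apply, map_add, map_sub, map_mul, map_pow, map_ofNat,
      aeval_X, map_zero]
    ring
  rw [← hkey] at himg
  have hu : IsUnit (C (32 : ℚ)) := isUnit_C.mpr (by norm_num)
  exact ((associated_mul_unit_left q _ hu).irreducible himg)

set_option maxHeartbeats 1000000 in
set_option synthInstance.maxHeartbeats 100000 in
/-- The polynomial `q(x) = 8x⁴ + 14x³ - 11x² - 11x - 2` is irreducible over
`ℚ`, and for any root `β ∈ ℂ` of `q`, the quartic number field `ℚ(β)` is a Galois extension
of `ℚ` whose Galois group is cyclic of order `4`; i.e. `ℚ(β)` is a cyclic quartic number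
field. -/
theorem cyclic_quartic_field_beta
    (q : ℚ[X]) (hq : q = 8 * X ^ 4 + 14 * X ^ 3 - 11 * X ^ 2 - 11 * X - 2) :
    Irreducible q ∧
    ∀ β : ℂ, aeval β q = 0 →
      Module.finrank ℚ ℚ⟮β⟯ = 4 ∧
      IsGalois ℚ ℚ⟮β⟯ ∧
      IsCyclic (ℚ⟮β⟯ ≃ₐ[ℚ] ℚ⟮β⟯) ∧
      Nat.card (ℚ⟮β⟯ ≃ₐ[ℚ] ℚ⟮β⟯) = 4 := by
  have hirr : Irreducible q := q_irred q hq
  refine ⟨hirr, ?_⟩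
  intro β hroot
  -- basic facts about β
  have hβ0 : 8 * β ^ 4 + 14 * β ^ 3 - 11 * β ^ 2 - 11 * β - 2 = 0 := by
    have h := hroot
    rw [hq] at h
    simpa [map_add, map_sub, map_mul, map_pow, map_ofNat] using h
  have hqdeg : q.natDegree = 4 := by rw [hq]; compute_degree!
  have hqne : q ≠ 0 := fun h => by simp [h] at hqdeg
  have hβint : IsIntegral ℚ β := (IsAlgebraic.isIntegral ⟨q, hqne, hroot⟩)
  have hmin : q * C q.leadingCoeff⁻¹ = minpoly ℚ β := minpoly.eq_of_irreducible hirr hroot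
  have hlcne : q.leadingCoeff⁻¹ ≠ 0 := inv_ne_zero (leadingCoeff_ne_zero.mpr hqne)
  have hmindeg : (minpoly ℚ β).natDegree = 4 := by
    rw [← hmin, natDegree_mul_C hlcne, hqdeg]
  have hfinrank : Module.finrank ℚ ℚ⟮β⟯ = 4 := by
    rw [IntermediateField.adjoin.finrank hβint, hmindeg]
  haveI : FiniteDimensional ℚ ℚ⟮β⟯ := IntermediateField.adjoin.finiteDimensional hβint
  refine ⟨hfinrank, ?_⟩
  -- the generator of ℚ⟮β⟯
  set K := ℚ⟮β⟯ with hK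
  let b : K := IntermediateField.AdjoinSimple.gen ℚ β
  have hmapb : algebraMap K ℂ b = β := IntermediateField.AdjoinSimple.algebraMap_gen ℚ β
  have hinj : Function.Injective (algebraMap K ℂ) := (algebraMap K ℂ).injective
  have hminb : minpoly ℚ b = minpoly ℚ β := by
    rw [← hmapb]; exact (minpoly.algebraMap_eq (A := ℚ) hinj b).symm
  -- the three conjugates of b as cubic polynomials in b
  let Pb : K := 6 + (27/2 : K) * b - 12 * b ^ 2 - 8 * b ^ 3
  let Q2b : K := -14 - (133/4 : K) * b + (51/2 : K) * b ^ 2 + 18 * b ^ 3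
  let Q3b : K := (25/4 : K) + (75/4 : K) * b - (27/2 : K) * b ^ 2 - 10 * b ^ 3
  -- images in ℂ
  have hmapPb : algebraMap K ℂ Pb = 6 + (27/2 : ℂ) * β - 12 * β ^ 2 - 8 * β ^ 3 := by
    simp [Pb, map_add, map_sub, map_mul, map_pow, map_ofNat, map_div₀, hmapb]
  have hmapQ2b : algebraMap K ℂ Q2b = -14 - (133/4 : ℂ) * β + (51/2 : ℂ) * β ^ 2
      + 18 * β ^ 3 := by
    simp [Q2b, map_add, map_sub, map_mul, map_pow, map_ofNat, map_div₀, map_neg, hmapb]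
  have hmapQ3b : algebraMap K ℂ Q3b = (25/4 : ℂ) + (75/4 : ℂ) * β - (27/2 : ℂ) * β ^ 2
      - 10 * β ^ 3 := by
    simp [Q3b, map_add, map_sub, map_mul, map_pow, map_ofNat, map_div₀, hmapb]
  -- Pb is a root of the minimal polynomial of b
  have haevalPb : aeval Pb q = 0 := by
    apply hinj
    rw [map_zero, ← aeval_algebraMap_apply, hmapPb, hq]
    simp only [map_add, map_sub, map_mul, map_pow, map_ofNat, aeval_X]
    linear_combination (4096*β^8 + 17408*β^7 + 2816*β^6 - 57664*β^5 - 25488*β^4 + 67932*β^3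
      + 17709*β^2 - (81379/4)*β - 6464) * hβ0
  have hPbroot : aeval Pb (minpoly ℚ b) = 0 := by
    rw [hminb, ← hmin, map_mul, haevalPb, zero_mul]
  -- construct the automorphism σ with σ(b) = Pb
  let pb := IntermediateField.adjoin.powerBasis hβint
  have hpbgen : pb.gen = b := IntermediateField.adjoin.powerBasis_gen hβint
  let φ : K →ₐ[ℚ] K := pb.lift Pb (by rw [hpbgen]; exact hPbroot)
  let σ : K ≃ₐ[ℚ] K := AlgEquiv.ofBijective φ φ.bijective
  have hσb : σ b = Pb := by
    show φ b = Pb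
    rw [← hpbgen]
    exact PowerBasis.lift_gen pb Pb _
  -- σ commutes with cubic polynomial expressions
  have hσPb : σ Pb = 6 + (27/2 : K) * σ b - 12 * (σ b) ^ 2 - 8 * (σ b) ^ 3 := by
    simp [Pb, map_add, map_sub, map_mul, map_pow, map_ofNat, map_div₀]
  have hσQ2b : σ Q2b = -14 - (133/4 : K) * σ b + (51/2 : K) * (σ b) ^ 2 + 18 * (σ b) ^ 3 := by
    simp [Q2b, map_add, map_sub, map_mul, map_pow, map_ofNat, map_div₀, map_neg]
  have hσQ3b : σ Q3b = (25/4 : K) + (75/4 : K) * σ b - (27/2 : K) * (σ b) ^ 2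
      - 10 * (σ b) ^ 3 := by
    simp [Q3b, map_add, map_sub, map_mul, map_pow, map_ofNat, map_div₀]
  -- key identities in K, proved by passing to ℂ
  have hE1 : 6 + (27/2 : K) * Pb - 12 * Pb ^ 2 - 8 * Pb ^ 3 = Q2b := by
    apply hinj
    simp only [map_add, map_sub, map_mul, map_pow, map_ofNat, map_div₀, hmapPb, hmapQ2b]
    linear_combination (512*β^5 + 1408*β^4 - 896*β^3 - 3088*β^2 + 1034*β + 2059/2) * hβ0
  have hE2 : -14 - (133/4 : K) * Pb + (51/2 : K) * Pb ^ 2 + 18 * Pb ^ 3 = Q3b := by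
    apply hinj
    simp only [map_add, map_sub, map_mul, map_pow, map_ofNat, map_div₀, map_neg, hmapPb, hmapQ3b]
    linear_combination (-1152*β^5 - 3168*β^4 + 2016*β^3 + 6936*β^2 - (4683/2)*β
      - 18345/8) * hβ0
  have hE3 : (25/4 : K) + (75/4 : K) * Pb - (27/2 : K) * Pb ^ 2 - 10 * Pb ^ 3 = b := by
    apply hinj
    simp only [map_add, map_sub, map_mul, map_pow, map_ofNat, map_div₀, hmapPb, hmapQ3b, hmapb]
    linear_combination (640*β^5 + 1760*β^4 - 1120*β^3 - 3848*β^2 + (2615/2)*β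
      + 10109/8) * hβ0
  -- iterates of σ on b
  have hσ2b : σ (σ b) = Q2b := by rw [hσb, hσPb, hσb]; exact hE1
  have hσ3b : σ (σ (σ b)) = Q3b := by rw [hσ2b, hσQ2b, hσb]; exact hE2
  have hσ4b : σ (σ (σ (σ b))) = b := by rw [hσ3b, hσQ3b, hσb]; exact hE3
  -- σ has order 4
  have h4 : σ ^ 4 = 1 := by
    have hhom : (σ ^ 4 : K ≃ₐ[ℚ] K).toAlgHom = AlgHom.id ℚ K := by
      apply pb.algHom_ext
      rw [hpbgen]
      show (σ ^ 4) b = b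
      rw [show (σ ^ 4) b = σ (σ (σ (σ b))) from by
        rw [pow_succ, pow_succ, pow_succ, pow_one]
        rfl]
      exact hσ4b
    ext x
    have := congrArg (fun f => f x) hhom
    simpa using this
  have hdeg_min : (minpoly ℚ β).degree = 4 := by
    rw [degree_eq_natDegree (minpoly.ne_zero hβint), hmindeg]; rfl
  have hσ2ne : σ ^ 2 ≠ 1 := by
    intro h
    have hb2 : σ (σ b) = b := by
      have := congrArg (fun f : K ≃ₐ[ℚ] K => f b) h
      simpa [pow_succ, pow_one] using this
    rw [hσ2b] at hb2
    -- then β is a root of a nonzero cubic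
    have hQ2β : -14 - (133/4 : ℂ) * β + (51/2 : ℂ) * β ^ 2 + 18 * β ^ 3 = β := by
      rw [← hmapQ2b, ← hmapb]; exact congrArg _ hb2
    set g : ℚ[X] := 72 * X ^ 3 + 102 * X ^ 2 - 137 * X - 56 with hg
    have hgdeg : g.natDegree = 3 := by rw [hg]; compute_degree!
    have hgne : g ≠ 0 := fun h0 => by simp [h0] at hgdeg
    have hgroot : aeval β g = 0 := by
      rw [hg]
      simp only [map_add, map_sub, map_mul, map_pow, map_ofNat, aeval_X]
      linear_combination 4 * hQ2β
    have hle := minpoly.degree_le_of_ne_zero ℚ β hgne hgroot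
    rw [hdeg_min, degree_eq_natDegree hgne, hgdeg] at hle
    norm_num at hle
  have horder : orderOf σ = 4 := by
    have hdvd : orderOf σ ∣ 4 := orderOf_dvd_of_pow_eq_one h4
    have hmem : orderOf σ ∈ Nat.divisors 4 := Nat.mem_divisors.mpr ⟨hdvd, by norm_num⟩
    rw [show Nat.divisors 4 = {1, 2, 4} from by decide] at hmem
    simp only [Finset.mem_insert, Finset.mem_singleton] at hmem
    rcases hmem with h1 | h2 | h4'
    · exfalso
      apply hσ2ne
      have h1' : σ = 1 := orderOf_eq_one_iff.mp h1
      rw [h1', one_pow]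
    · exfalso
      apply hσ2ne
      have := pow_orderOf_eq_one σ
      rwa [h2] at this
    · exact h4'
  -- the automorphism group has exactly 4 elements
  haveI : DecidablePred (· ∈ (⊤ : Subgroup (↥K ≃ₐ[ℚ] ↥K))) := Classical.decPred _
  have hfix := IntermediateField.finrank_fixedField_eq_card (F := ℚ) (E := ↥K)
    (⊤ : Subgroup (↥K ≃ₐ[ℚ] ↥K))
  have htop : Fintype.card (⊤ : Subgroup (↥K ≃ₐ[ℚ] ↥K)) = Fintype.card (↥K ≃ₐ[ℚ] ↥K) :=
    Fintype.card_congr Subgroup.topEquiv.toEquiv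
  have htower : Module.finrank ℚ
        ↥(IntermediateField.fixedField (⊤ : Subgroup (↥K ≃ₐ[ℚ] ↥K)))
      * Module.finrank ↥(IntermediateField.fixedField (⊤ : Subgroup (↥K ≃ₐ[ℚ] ↥K))) ↥K
      = Module.finrank ℚ ↥K :=
    Module.finrank_mul_finrank ℚ
      ↥(IntermediateField.fixedField (⊤ : Subgroup (↥K ≃ₐ[ℚ] ↥K))) ↥K
  have hcard_dvd : Fintype.card (↥K ≃ₐ[ℚ] ↥K) ∣ 4 := by
    refine ⟨Module.finrank ℚ
      ↥(IntermediateField.fixedField (⊤ : Subgroup (↥K ≃ₐ[ℚ] ↥K))), ?_⟩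
    rw [← hfinrank, ← htower, ← htop, ← Nat.card_eq_fintype_card, ← hfix]
    ring
  have hdvd_card : (4 : ℕ) ∣ Fintype.card (↥K ≃ₐ[ℚ] ↥K) := horder ▸ orderOf_dvd_card
  have hcard : Fintype.card (↥K ≃ₐ[ℚ] ↥K) = 4 := Nat.dvd_antisymm hcard_dvd hdvd_card
  haveI hgal : IsGalois ℚ ↥K := IsGalois.of_card_aut_eq_finrank ℚ ↥K
    (by rw [Nat.card_eq_fintype_card, hcard, hfinrank])
  have hncard : Nat.card (↥K ≃ₐ[ℚ] ↥K) = 4 := by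
    rw [Nat.card_eq_fintype_card, hcard]
  exact ⟨hgal, isCyclic_of_orderOf_eq_card σ (by rw [horder, hncard]), hncard⟩
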